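/- Let α, β, γ, λ be real numbers with m := γ − α + β + 2 ≠ 0, and let ε ∈ ℝ. Suppose y : (0,∞) → ℝ is differentiable with y′(x) < 0 for all x > 0, and the function x ↦ x^α (−y′(x))^{β+1} is differentiable on (0,∞) with derivative λ x^γ e^{y(x)} for every x > 0 (i.e. y solves −(x^α |y′|^β y′)′ = λ x^γ e^y). Then the transformed function ỹ(x) = y(e^{ε/m} x) + ε again satisfies ỹ′ < 0 on (0,∞), and x ↦ x^α (−ỹ′(x))^{β+1} is differentiable on (0,∞) with derivative λ x^γ e^{ỹ(x)}. (This is the substance of Theorem 4: the one-parameter group generated by X₂ maps solutions of the exponential model equation to solutions.) -/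
import Mathlib


open Real Set

/-- the one-parameter group generated by X₂, acting by
ỹ(x) = y(e^{ε/m} x) + ε, maps decreasing solutions of the exponential model
equation −(x^α |y′|^β y′)′ = λ x^γ e^y to solutions. -/
theorem symmetry_exponential_model_equation
    (α β γ lam : ℝ) (m : ℝ) (hm0 : m = γ - α + β + 2) (hm : m ≠ 0)
    (ε : ℝ) (y : ℝ → ℝ)
    (hdiff : ∀ x > (0:ℝ), DifferentiableAt ℝ y x)
    (hdec : ∀ x > (0:ℝ), deriv y x < 0)
    (heq : ∀ x > (0:ℝ), HasDerivAt (fun t : ℝ => t ^ α * (-deriv y t) ^ (β + 1))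
      (lam * x ^ γ * Real.exp (y x)) x) :
    (∀ x > (0:ℝ), deriv (fun s : ℝ => y (Real.exp (ε / m) * s) + ε) x < 0) ∧
    (∀ x > (0:ℝ), HasDerivAt
      (fun t : ℝ => t ^ α * (-deriv (fun s : ℝ => y (Real.exp (ε / m) * s) + ε) t) ^ (β + 1))
      (lam * x ^ γ * Real.exp (y (Real.exp (ε / m) * x) + ε)) x) := by
  set c := Real.exp (ε / m) with hc_def
  have hc : (0:ℝ) < c := Real.exp_pos _
  have hderiv : ∀ t > (0:ℝ), HasDerivAt (fun s : ℝ => y (c * s) + ε)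
      (deriv y (c * t) * c) t := by
    intro t ht
    have h1 : HasDerivAt (fun s : ℝ => c * s) c t := by
      simpa using (hasDerivAt_id t).const_mul c
    exact (((hdiff (c * t) (by positivity)).hasDerivAt).comp t h1).add_const ε
  have hderiv' : ∀ t > (0:ℝ),
      deriv (fun s : ℝ => y (c * s) + ε) t = deriv y (c * t) * c :=
    fun t ht => (hderiv t ht).deriv
  have hcm : c ^ m = Real.exp ε := by
    rw [hc_def, ← Real.exp_mul, div_mul_cancel₀ _ hm]
  refine ⟨fun x hx => ?_, fun x hx => ?_⟩
  · rw [hderiv' x hx]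
    exact mul_neg_of_neg_of_pos (hdec _ (by positivity)) hc
  · have hF := heq (c * x) (by positivity)
    have h1 : HasDerivAt (fun s : ℝ => c * s) c x := by
      simpa using (hasDerivAt_id x).const_mul c
    have hcomp : HasDerivAt
        (fun t : ℝ => c ^ (β + 1 - α) * ((c * t) ^ α * (-deriv y (c * t)) ^ (β + 1)))
        (c ^ (β + 1 - α) * (lam * (c * x) ^ γ * Real.exp (y (c * x)) * c)) x :=
      (hF.comp x h1).const_mul _
    have heqval : c ^ (β + 1 - α) * (lam * (c * x) ^ γ * Real.exp (y (c * x)) * c)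
        = lam * x ^ γ * Real.exp (y (c * x) + ε) := by
      rw [Real.mul_rpow hc.le hx.le, Real.exp_add, ← hcm]
      have hcc : c ^ (β + 1 - α) * c ^ γ * c = c ^ m := by
        nth_rewrite 3 [← Real.rpow_one c]
        rw [← Real.rpow_add hc, ← Real.rpow_add hc,
          show β + 1 - α + γ + 1 = m by rw [hm0]; ring]
      linear_combination (lam * x ^ γ * Real.exp (y (c * x))) * hcc
    rw [← heqval]
    apply hcomp.congr_of_eventuallyEq
    filter_upwards [isOpen_Ioi.mem_nhds hx] with t ht
    have ht : (0:ℝ) < t := ht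
    have hdy : (0:ℝ) < -deriv y (c * t) := by
      have := hdec (c * t) (by positivity); linarith
    rw [hderiv' t ht]
    have : -(deriv y (c * t) * c) = (-deriv y (c * t)) * c := by ring
    rw [this, Real.mul_rpow hdy.le hc.le, Real.mul_rpow hc.le ht.le]
    rw [show β + 1 - α = β + 1 - α from rfl]
    have hca : c ^ (β + 1 - α) * c ^ α = c ^ (β + 1) := by
      rw [← Real.rpow_add hc]; ring_nf
    linear_combination (-(t ^ α * (-deriv y (c * t)) ^ (β + 1))) * hca
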